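/- The Kummer transformation φ(a,c;z) = e^z φ(c-a, c; -z) holds for all z ∈ ℂ and all a, c ∈ ℂ with c not a nonpositive integer. -/

import Mathlib

/-- Rising factorial (Pochhammer symbol) `(a)_n = a(a+1)⋯(a+n-1)`. -/
noncomputable def poch (a : ℂ) (n : ℕ) : ℂ := ∏ i ∈ Finset.range n, (a + i)

/-- The regular confluent hypergeometric (Kummer) function
`φ(a,c;z) = ∑_{n≥0} (a)_n/(c)_n · z^n/n!`. -/
noncomputable def kummerPhi (a c z : ℂ) : ℂ :=
  ∑' n : ℕ, (poch a n / poch c n) * z ^ n / (Nat.factorial n)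

lemma poch_zero (a : ℂ) : poch a 0 = 1 := by simp [poch]

lemma poch_succ (a : ℂ) (n : ℕ) : poch a (n + 1) = poch a n * (a + n) :=
  Finset.prod_range_succ _ _

lemma poch_succ' (a : ℂ) (n : ℕ) : poch a (n + 1) = a * poch (a + 1) n := by
  rw [poch, Finset.prod_range_succ']
  simp only [Nat.cast_zero, add_zero, mul_comm]
  congr 1
  · apply Finset.prod_congr rfl
    intro i _
    push_cast
    ring

lemma poch_add (a : ℂ) (k m : ℕ) : poch a (k + m) = poch a k * poch (a + k) m := by
  induction m with
  | zero => simp [poch]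
  | succ m ih =>
    rw [← Nat.add_assoc, poch_succ, ih, poch_succ]
    push_cast
    ring

lemma poch_ne_zero (c : ℂ) (hc : ∀ n : ℕ, c ≠ -(n : ℂ)) (n : ℕ) : poch c n ≠ 0 := by
  apply Finset.prod_ne_zero_iff.2
  intro i _
  intro h
  exact hc i (by linear_combination h)

/-- Key combinatorial identity (Vandermonde-type). -/
lemma keyId (n : ℕ) : ∀ b c : ℂ,
    ∑ k ∈ Finset.range (n + 1),
      (-1 : ℂ) ^ k * (n.choose k) * poch b k * poch (c + k) (n - k) = poch (c - b) n := by
  induction n with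
  | zero => intro b c; simp [poch]
  | succ n ih =>
    intro b c
    set W : ℕ → ℂ := fun k => (-1 : ℂ) ^ k * (n.choose k) * poch b k * poch (c + k) (n + 1 - k) with hWdef
    set A : ℕ → ℂ := fun k => (-1 : ℂ) ^ (k + 1) * (n.choose k) * poch b (k + 1) * poch (c + ((k + 1 : ℕ) : ℂ)) (n - k) with hAdef
    have step1 : ∑ k ∈ Finset.range (n + 1 + 1),
        (-1 : ℂ) ^ k * ((n + 1).choose k) * poch b k * poch (c + k) (n + 1 - k)
        = ∑ k ∈ Finset.range (n + 1), (W k + A k) := by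
      rw [Finset.sum_range_succ' _ (n + 1)]
      have hT : ∀ k ∈ Finset.range (n + 1),
          (-1 : ℂ) ^ (k + 1) * (((n + 1).choose (k + 1) : ℕ) : ℂ) * poch b (k + 1) * poch (c + ((k + 1 : ℕ) : ℂ)) (n + 1 - (k + 1))
          = W (k + 1) + A k := by
        intro k hk
        have h1 : n + 1 - (k + 1) = n - k := by omega
        simp only [hWdef, hAdef, h1, Nat.choose_succ_succ]
        push_cast
        ring
      rw [Finset.sum_congr rfl hT, Finset.sum_add_distrib, Finset.sum_add_distrib]
      have hW0 : (-1 : ℂ) ^ 0 * (((n + 1).choose 0 : ℕ) : ℂ) * poch b 0 * poch (c + ((0 : ℕ) : ℂ)) (n + 1 - 0) = W 0 := by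
        simp [hWdef]
      rw [hW0]
      have h2 : ∑ k ∈ Finset.range (n + 1), W (k + 1) + W 0 = ∑ k ∈ Finset.range (n + 1 + 1), W k :=
        (Finset.sum_range_succ' W (n + 1)).symm
      have h3 : ∑ k ∈ Finset.range (n + 1 + 1), W k = ∑ k ∈ Finset.range (n + 1), W k := by
        rw [Finset.sum_range_succ]
        simp [hWdef]
      rw [add_right_comm, h2, h3]
    rw [step1]
    have hterm : ∀ k ∈ Finset.range (n + 1),
        W k + A k = (c - b) * ((-1 : ℂ) ^ k * (n.choose k) * poch b k * poch ((c + 1) + k) (n - k)) := by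
      intro k hk
      have hk' : k ≤ n := Nat.lt_succ_iff.mp (Finset.mem_range.mp hk)
      have h1 : n + 1 - k = (n - k) + 1 := by omega
      simp only [hWdef, hAdef, h1, poch_succ' (c + k) (n - k), poch_succ b k]
      have h2 : (c + (k : ℂ)) + 1 = (c + 1) + k := by ring
      have h3 : (c + ((k + 1 : ℕ) : ℂ)) = (c + 1) + k := by push_cast; ring
      rw [h2, h3]
      ring
    rw [Finset.sum_congr rfl hterm, ← Finset.mul_sum, ih b (c + 1)]
    rw [poch_succ' (c - b) n]
    congr 1
    ring

lemma poch_shift (c : ℂ) (hc : ∀ n : ℕ, c ≠ -(n : ℂ)) (k : ℕ) :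
    ∀ n : ℕ, (c + k) ≠ -(n : ℂ) := by
  intro n h
  exact hc (k + n) (by push_cast; linear_combination h)

lemma summable_norm_kummer (b c z : ℂ) (hc : ∀ n : ℕ, c ≠ -(n : ℂ)) :
    Summable fun n : ℕ => ‖(poch b n / poch c n) * z ^ n / (Nat.factorial n)‖ := by
  set f : ℕ → ℂ := fun n => (poch b n / poch c n) * z ^ n / (Nat.factorial n) with hf
  have hrec : ∀ n : ℕ, f (n + 1) = f n * ((b + n) * z / ((c + n) * (n + 1))) := by
    intro n
    have hcn : poch c n ≠ 0 := poch_ne_zero c hc n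
    have hc1 : (c + (n : ℂ)) ≠ 0 := fun h => hc n (by linear_combination h)
    have hfac : ((Nat.factorial n : ℂ)) ≠ 0 := by exact_mod_cast n.factorial_ne_zero
    have hn1 : ((n : ℂ) + 1) ≠ 0 := by
      intro h
      have := congrArg Complex.re h
      simp [Complex.add_re] at this
      nlinarith [this, Nat.cast_nonneg (α := ℝ) n]
    simp only [hf, poch_succ, Nat.factorial_succ]
    push_cast
    field_simp
    ring
  rw [summable_norm_iff]
  apply summable_of_ratio_norm_eventually_le (r := 1/2) (by norm_num)
  have h1 : ∀ᶠ n : ℕ in Filter.atTop, (1 : ℝ) ≤ n := by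
    exact_mod_cast Filter.eventually_ge_atTop 1
  have h2 : ∀ᶠ n : ℕ in Filter.atTop, 2 * ‖c‖ ≤ n := by
    have := tendsto_natCast_atTop_atTop (R := ℝ)
    exact this.eventually_ge_atTop _
  have h3 : ∀ᶠ n : ℕ in Filter.atTop, ‖b‖ ≤ n := by
    have := tendsto_natCast_atTop_atTop (R := ℝ)
    exact this.eventually_ge_atTop _
  have h4 : ∀ᶠ n : ℕ in Filter.atTop, 8 * ‖z‖ ≤ n := by
    have := tendsto_natCast_atTop_atTop (R := ℝ)
    exact this.eventually_ge_atTop _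
  filter_upwards [h1, h2, h3, h4] with n hn1 hn2 hn3 hn4
  show ‖f (n + 1)‖ ≤ 1 / 2 * ‖f n‖
  rw [hrec n]
  have hfactor : ‖(b + (n : ℂ)) * z / ((c + n) * ((n : ℂ) + 1))‖ ≤ 1 / 2 := by
    rw [norm_div, norm_mul, norm_mul]
    have hnum : ‖b + (n : ℂ)‖ ≤ 2 * n := by
      calc ‖b + (n : ℂ)‖ ≤ ‖b‖ + ‖(n : ℂ)‖ := norm_add_le _ _
        _ = ‖b‖ + n := by rw [Complex.norm_natCast]
        _ ≤ 2 * n := by linarith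
    have hden1 : (n : ℝ) / 2 ≤ ‖c + (n : ℂ)‖ := by
      have : ‖(n : ℂ)‖ - ‖(-c : ℂ)‖ ≤ ‖(n : ℂ) - (-c)‖ := by
        exact norm_sub_norm_le _ _
      rw [Complex.norm_natCast, norm_neg, sub_neg_eq_add] at this
      have hcc : (n : ℂ) + c = c + n := by ring
      rw [hcc] at this
      linarith
    have hden2 : ‖((n : ℂ) + 1)‖ = (n : ℝ) + 1 := by
      have : ((n : ℂ) + 1) = ((n + 1 : ℕ) : ℂ) := by push_cast; ring
      rw [this, Complex.norm_natCast]; push_cast; ring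
    rw [hden2]
    have hpos : (0 : ℝ) < (n / 2) * (n + 1) := by
      apply mul_pos <;> nlinarith
    calc ‖b + (n : ℂ)‖ * ‖z‖ / (‖c + (n : ℂ)‖ * ((n : ℝ) + 1))
        ≤ (2 * n * ‖z‖) / ((n / 2) * ((n : ℝ) + 1)) := by
          apply div_le_div₀ (by positivity)
          · exact mul_le_mul_of_nonneg_right hnum (norm_nonneg z)
          · exact hpos
          · exact mul_le_mul_of_nonneg_right hden1 (by linarith)
      _ ≤ 1 / 2 := by
          rw [div_le_iff₀ hpos]
          nlinarith [norm_nonneg z]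
  calc ‖f n * ((b + (n : ℂ)) * z / ((c + n) * ((n : ℂ) + 1)))‖
      = ‖f n‖ * ‖(b + (n : ℂ)) * z / ((c + n) * ((n : ℂ) + 1))‖ := by
        rw [norm_mul]
    _ ≤ ‖f n‖ * (1 / 2) := mul_le_mul_of_nonneg_left hfactor (norm_nonneg _)
    _ = 1 / 2 * ‖f n‖ := by ring

/-- The Kummer transformation `φ(a,c;z) = e^z φ(c-a, c; -z)` for all `z ∈ ℂ` and all
`a, c ∈ ℂ` with `c` not a nonpositive integer. -/
theorem kummer_transformation (a c z : ℂ) (hc : ∀ n : ℕ, c ≠ -(n : ℂ)) :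
    kummerPhi a c z = Complex.exp z * kummerPhi (c - a) c (-z) := by
  have hexp : Complex.exp z = ∑' n : ℕ, z ^ n / (Nat.factorial n) := by
    rw [Complex.exp_eq_exp_ℂ, NormedSpace.exp_eq_tsum_div]
  have hsum1 : Summable fun n : ℕ => ‖(z ^ n / (Nat.factorial n) : ℂ)‖ := by
    have : ∀ n : ℕ, ‖(z ^ n / (Nat.factorial n) : ℂ)‖ = ‖z‖ ^ n / (Nat.factorial n) := by
      intro n
      rw [norm_div, norm_pow, Complex.norm_natCast]
    rw [funext this]
    exact Real.summable_pow_div_factorial _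
  have hsum2 := summable_norm_kummer (c - a) c (-z) hc
  rw [hexp]
  simp only [kummerPhi]
  rw [tsum_mul_tsum_eq_tsum_sum_range_of_summable_norm hsum1 hsum2]
  apply tsum_congr
  intro n
  have hterm : ∀ k ∈ Finset.range (n + 1),
      z ^ k / (Nat.factorial k) * ((poch (c - a) (n - k) / poch c (n - k)) * (-z) ^ (n - k) / (Nat.factorial (n - k)))
      = ((-1 : ℂ) ^ (n - k) * ((n.choose (n - k) : ℕ) : ℂ) * poch (c - a) (n - k) * poch (c + (((n - k : ℕ) : ℕ) : ℂ)) (n - (n - k)))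
          * (z ^ n / (poch c n * (Nat.factorial n))) := by
    intro k hk
    have hkn : k ≤ n := Nat.lt_succ_iff.mp (Finset.mem_range.mp hk)
    set m := n - k with hm
    have hmn : m ≤ n := Nat.sub_le _ _
    have hnm : n - m = k := by omega
    have hchoose : ((n.choose m : ℕ) : ℂ) * (Nat.factorial m) * (Nat.factorial (n - m)) = (Nat.factorial n) := by
      exact_mod_cast Nat.choose_mul_factorial_mul_factorial hmn
    have hpochsplit : poch c n = poch c m * poch (c + m) (n - m) := by
      have h := poch_add c m (n - m)
      rwa [Nat.add_sub_cancel' hmn] at h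
    have hcm : poch c m ≠ 0 := poch_ne_zero c hc m
    have hcm2 : poch (c + m) (n - m) ≠ 0 := poch_ne_zero _ (poch_shift c hc m) _
    have hfm : ((Nat.factorial m : ℂ)) ≠ 0 := by exact_mod_cast m.factorial_ne_zero
    have hfk : ((Nat.factorial k : ℂ)) ≠ 0 := by exact_mod_cast k.factorial_ne_zero
    have hfn : ((Nat.factorial n : ℂ)) ≠ 0 := by exact_mod_cast n.factorial_ne_zero
    have hzpow : z ^ k * z ^ m = z ^ n := by
      rw [← pow_add]; congr 1; omega
    have hfk' : ((Nat.factorial (n - m) : ℂ)) = ((Nat.factorial k : ℂ)) := by rw [hnm]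
    rw [hpochsplit, neg_pow z m]
    field_simp
    rw [hfk'] at hchoose
    linear_combination (poch (c - a) m * ((Nat.factorial n : ℕ) : ℂ)) * hzpow
      - (poch (c - a) m * z ^ n) * hchoose
  rw [Finset.sum_congr rfl hterm, ← Finset.sum_mul]
  have hre := Finset.sum_range_reflect
    (fun k => (-1 : ℂ) ^ k * ((n.choose k : ℕ) : ℂ) * poch (c - a) k * poch (c + ((k : ℕ) : ℂ)) (n - k)) (n + 1)
  simp only [Nat.add_sub_cancel] at hre
  rw [hre, keyId n (c - a) c]
  have hca : c - (c - a) = a := by ring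
  rw [hca]
  have hcn : poch c n ≠ 0 := poch_ne_zero c hc n
  have hfn : ((Nat.factorial n : ℂ)) ≠ 0 := by exact_mod_cast n.factorial_ne_zero
  field_simp
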